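/- Let X be a real-valued random variable (bounded, or such that all relevant expectations exist). Then E[exp(X − E[X])] ≤ (1/2)E[exp(2X)] + (1/2)E[exp(−2X)]. -/

import Mathlib

open MeasureTheory

theorem exp_centered_le {Ω : Type*} [MeasurableSpace Ω] (μ : Measure Ω)
    [IsProbabilityMeasure μ] (X : Ω → ℝ)
    (hX : Integrable X μ)
    (h2 : Integrable (fun ω => Real.exp (2 * X ω)) μ)
    (h2' : Integrable (fun ω => Real.exp (-2 * X ω)) μ) :
    ∫ ω, Real.exp (X ω - ∫ ω', X ω' ∂μ) ∂μ ≤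
      (1 / 2) * ∫ ω, Real.exp (2 * X ω) ∂μ + (1 / 2) * ∫ ω, Real.exp (-2 * X ω) ∂μ := by
  set m := ∫ ω', X ω' ∂μ with hm
  -- Jensen: exp(-2m) ≤ ∫ exp(-2X)
  have hJ : Real.exp (-2 * m) ≤ ∫ ω, Real.exp (-2 * X ω) ∂μ := by
    have hfi : Integrable (fun ω => -2 * X ω) μ := hX.const_mul (-2)
    have := convexOn_exp.map_integral_le (μ := μ) (f := fun ω => -2 * X ω)
      Real.continuous_exp.continuousOn isClosed_univ
      (Filter.Eventually.of_forall fun _ => trivial) hfi (by exact h2')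
    calc Real.exp (-2 * m) = Real.exp (∫ ω, -2 * X ω ∂μ) := by
          rw [integral_const_mul]
      _ ≤ ∫ ω, Real.exp (-2 * X ω) ∂μ := this
  -- pointwise bound
  have hpt : ∀ ω, Real.exp (X ω - m) ≤
      (1 / 2) * Real.exp (2 * X ω) + (1 / 2) * Real.exp (-2 * m) := by
    intro ω
    have := convexOn_exp.2 (Set.mem_univ (2 * X ω)) (Set.mem_univ (-2 * m))
      (by norm_num : (0:ℝ) ≤ 1/2) (by norm_num : (0:ℝ) ≤ 1/2) (by norm_num)
    simp only [smul_eq_mul] at this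
    rw [show (1/2 : ℝ) * (2 * X ω) + (1/2) * (-2 * m) = X ω - m
      from by ring] at this
    linarith [this]
  -- integrability of exp(X - m)
  have hint : Integrable (fun ω => Real.exp (X ω - m)) μ := by
    have hmeas : AEStronglyMeasurable (fun ω => Real.exp (X ω - m)) μ :=
      (Real.continuous_exp.comp (continuous_id.sub continuous_const)).comp_aestronglyMeasurable
        hX.aestronglyMeasurable
    refine Integrable.mono ((h2.const_mul (1/2)).add ((integrable_const (Real.exp (-2 * m))).const_mul (1/2)))
      hmeas (Filter.Eventually.of_forall fun ω => ?_)
    simp only [Real.norm_eq_abs, abs_of_pos (Real.exp_pos _)]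
    have := hpt ω
    have h2pos : (0:ℝ) < (1/2) * Real.exp (2 * X ω) + (1/2) * Real.exp (-2*m) := by positivity
    calc Real.exp (X ω - m) ≤ (1/2) * Real.exp (2 * X ω) + (1/2) * Real.exp (-2*m) := this
      _ ≤ |(1/2) * Real.exp (2 * X ω) + (1/2) * Real.exp (-2*m)| := le_abs_self _
  have hstep : ∫ ω, Real.exp (X ω - m) ∂μ ≤
      (1 / 2) * ∫ ω, Real.exp (2 * X ω) ∂μ + (1 / 2) * Real.exp (-2 * m) := by
    have := integral_mono hint ((h2.const_mul (1/2)).add ((integrable_const (Real.exp (-2 * m))).const_mul (1/2)))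
      hpt
    calc ∫ ω, Real.exp (X ω - m) ∂μ
        ≤ ∫ ω, ((1/2) * Real.exp (2 * X ω) + (1/2) * Real.exp (-2 * m)) ∂μ := this
      _ = (1 / 2) * ∫ ω, Real.exp (2 * X ω) ∂μ + (1 / 2) * Real.exp (-2 * m) := by
          rw [integral_add (h2.const_mul _) ((integrable_const (Real.exp (-2 * m))).const_mul _),
            integral_const_mul, integral_const_mul, integral_const]
          simp
  calc ∫ ω, Real.exp (X ω - m) ∂μ
      ≤ (1 / 2) * ∫ ω, Real.exp (2 * X ω) ∂μ + (1 / 2) * Real.exp (-2 * m) := hstep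
    _ ≤ (1 / 2) * ∫ ω, Real.exp (2 * X ω) ∂μ + (1 / 2) * ∫ ω, Real.exp (-2 * X ω) ∂μ := by
        gcongr
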